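/- (Roberts' continuum) Let the vorticities be Γ_1 = Γ_2 = Γ_3 = Γ_4 = 2 and Γ_5 = −1. For any real numbers a, t with a² + t² = 1, a ≠ 0 and t ≠ 0, the configuration z = (a, i t, −a, −i t, 0) ∈ ℂ⁵ has pairwise distinct components and satisfies V_n = ∑_{j ≠ n} Γ_j / conj(z_n − z_j) = 4 z_n for every n = 1, …, 5; hence it is a relative equilibrium of the five-vortex problem. -/

import Mathlib

open Finset

/-- Roberts' continuum: for vorticities (2,2,2,2,−1) and a² + t² = 1 with a, t ≠ 0,
the rhombus configuration (a, it, −a, −it, 0) is a relative equilibrium with V_n = 4 z_n. -/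
theorem roberts_continuum_relative_equilibrium
    (a t : ℝ) (h : a ^ 2 + t ^ 2 = 1) (ha : a ≠ 0) (ht : t ≠ 0) :
    let Γ : Fin 5 → ℝ := ![2, 2, 2, 2, -1]
    let z : Fin 5 → ℂ := ![(a : ℂ), Complex.I * t, -(a : ℂ), -(Complex.I * t), 0]
    Function.Injective z ∧
    ∀ n : Fin 5,
      ∑ j ∈ Finset.univ.filter (fun j => j ≠ n),
        (Γ j : ℂ) / (starRingEnd ℂ) (z n - z j) = 4 * z n := by
  intro Γ z
  have ha' : (a : ℂ) ≠ 0 := by exact_mod_cast ha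
  have ht' : (t : ℂ) ≠ 0 := by exact_mod_cast ht
  have h' : (a:ℂ)^2 + (t:ℂ)^2 = 1 := by exact_mod_cast h
  have hp : (a:ℂ) + Complex.I * t ≠ 0 := by
    intro hh
    have := congrArg Complex.re hh
    simp at this
    exact ha this
  have hm : (a:ℂ) - Complex.I * t ≠ 0 := by
    intro hh
    have := congrArg Complex.re hh
    simp at this
    exact ha this
  have hI : Complex.I ≠ 0 := Complex.I_ne_zero
  have hIt : Complex.I * t ≠ 0 := mul_ne_zero hI ht'
  have hp2 : -(Complex.I * (t:ℂ)) - a ≠ 0 := fun hh => hp (by linear_combination -hh)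
  have hp3 : -(a:ℂ) - Complex.I * t ≠ 0 := fun hh => hp (by linear_combination -hh)
  have hp4 : Complex.I * (t:ℂ) + a ≠ 0 := fun hh => hp (by linear_combination hh)
  have hm2 : -(Complex.I * (t:ℂ)) + a ≠ 0 := fun hh => hm (by linear_combination hh)
  have hm3 : -(a:ℂ) + Complex.I * t ≠ 0 := fun hh => hm (by linear_combination -hh)
  have hm4 : Complex.I * (t:ℂ) - a ≠ 0 := fun hh => hm (by linear_combination -hh)
  have hq1 : (a:ℂ) + -(Complex.I * t) ≠ 0 := fun hh => hm (by linear_combination hh)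
  have hq2 : -(a:ℂ) - a ≠ 0 := fun hh => ha' (by linear_combination -hh/2)
  have hq3 : -(a:ℂ) + -(Complex.I * t) ≠ 0 := fun hh => hp (by linear_combination -hh)
  have hq4 : (a:ℂ) + a ≠ 0 := fun hh => ha' (by linear_combination hh/2)
  constructor
  · intro i j hij
    fin_cases i <;> fin_cases j <;>
      first
      | rfl
      | (exfalso; simp [z, Complex.ext_iff] at hij;
         first
         | exact ha (by linarith)
         | exact ht (by linarith)
         | simp_all)
  · intro n
    fin_cases n <;>
      simp only [Finset.sum_filter, Fin.sum_univ_five] <;>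
      simp [z, Γ, Complex.conj_ofReal, map_sub, map_mul, Complex.conj_I] <;>
      field_simp [ha',ht',hp,hm,hp2,hp3,hp4,hm2,hm3,hm4,hIt,hq1,hq2,hq3,hq4]
    · linear_combination (-8*(a:ℂ)^2) * h' + (8*(a:ℂ)^2*(t:ℂ)^2) * Complex.I_sq
    · linear_combination (8*(t:ℂ)^3) * h' +
        (8*(t:ℂ)^3 - 8*(t:ℂ)^5 - 2*(a:ℂ)^2*t - 8*(a:ℂ)^2*(t:ℂ)^3
          + 2*Complex.I^2*(t:ℂ)^3 + 8*Complex.I^2*(t:ℂ)^5) * Complex.I_sq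
        + ((t:ℂ)-1)*(2 + Complex.I^2*(2+8*(t:ℂ)^2)) * h'
        + ((t:ℂ)-1)*(2 - 2*(t:ℂ)^2 - (2*(t:ℂ)^2+8*(t:ℂ)^4)*Complex.I^2) * Complex.I_sq
    · linear_combination (-8*(a:ℂ)^2) * h' + (8*(a:ℂ)^2*(t:ℂ)^2) * Complex.I_sq
    · linear_combination (8*Complex.I*(t:ℂ)^3) * h' +
        (8*Complex.I*(t:ℂ)^3 - 8*Complex.I*(t:ℂ)^5 - 8*Complex.I*(a:ℂ)^2*(t:ℂ)^3
          + 8*Complex.I^3*(t:ℂ)^5) * Complex.I_sq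
        + (8*Complex.I^3*(t:ℂ)^3 - 8*Complex.I^2*(t:ℂ)^2) * h'
        + (8*Complex.I^2*(t:ℂ)^4 - 8*Complex.I^3*(t:ℂ)^5) * Complex.I_sq
    · ring
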